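/- Let g be a finite simple graph, k a natural number, S ⊆ V(g), and let v_1, v_2, …, v_t be an enumeration of V(g)\S in non-decreasing order of |N̄_S(·)|. Then for every k-defective clique C of g with S ⊆ C ⊆ V(g), the first |C\S| terms satisfy ∑_{j=1}^{|C\S|} |N̄_S(v_j)| ≤ k − |Ē(S)|. Consequently |C| ≤ |S| + i*, where i* is the largest index i such that ∑_{j=1}^{i} |N̄_S(v_j)| ≤ k − |Ē(S)| (upper bound UB3). -/

import Mathlib

open Finset

variable {V : Type*} [Fintype V] [DecidableEq V]

/-- The set of non-edges of `S`: unordered pairs of distinct vertices of `S`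
that are not adjacent in `G`. -/
def nonEdges (G : SimpleGraph V) [DecidableRel G.Adj] (S : Finset V) : Finset (Sym2 V) :=
  ((S ×ˢ S).filter fun p => p.1 ≠ p.2 ∧ ¬ G.Adj p.1 p.2).image fun p => s(p.1, p.2)

/-- The set of non-neighbors of `u` among `S \ {u}`. -/
def nonNbrs (G : SimpleGraph V) [DecidableRel G.Adj] (S : Finset V) (u : V) : Finset V :=
  (S.erase u).filter fun w => ¬ G.Adj u w

omit [Fintype V] in
lemma mem_nonEdges {G : SimpleGraph V} [DecidableRel G.Adj] {S : Finset V} {a b : V} :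
    s(a, b) ∈ nonEdges G S ↔ a ∈ S ∧ b ∈ S ∧ a ≠ b ∧ ¬ G.Adj a b := by
  simp only [nonEdges, Finset.mem_image, Finset.mem_filter, Finset.mem_product, Prod.exists,
    Sym2.eq_iff]
  constructor
  · rintro ⟨x, y, ⟨⟨hx, hy⟩, hne, hadj⟩, (⟨rfl, rfl⟩ | ⟨rfl, rfl⟩)⟩
    · exact ⟨hx, hy, hne, hadj⟩
    · exact ⟨hy, hx, fun h => hne h.symm, fun h => hadj h.symm⟩
  · rintro ⟨ha, hb, hne, hadj⟩
    exact ⟨a, b, ⟨⟨ha, hb⟩, hne, hadj⟩, Or.inl ⟨rfl, rfl⟩⟩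

lemma fin_le_strictMono : ∀ {m : ℕ} {f : Fin m → ℕ}, StrictMono f → ∀ i : Fin m, (i : ℕ) ≤ f i
  | 0, _, _, i => i.elim0
  | (n + 1), f, hf, i => by
    induction i using Fin.induction with
    | zero => exact Nat.zero_le _
    | succ i ih =>
      have h := hf (Fin.castSucc_lt_succ : i.castSucc < i.succ)
      have h2 := ih
      have h3 : ((i.castSucc : Fin (n + 1)) : ℕ) = (i : ℕ) := rfl
      simp only [Fin.val_succ]
      omega

/-- Upper bound UB3: let `v 0, v 1, …, v (t-1)` enumerate `V(g) \ S` in non-decreasing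
order of `|N̄_S(·)|`. Then every `k`-defective clique `C` with `S ⊆ C` satisfies
`∑_{j < |C \ S|} |N̄_S(v j)| ≤ k − |Ē(S)|`; consequently `|C| ≤ |S| + i*` where `i*` is
the largest `i ≤ t` whose prefix sum is at most `k − |Ē(S)|`. -/
theorem ub3 (G : SimpleGraph V) [DecidableRel G.Adj] (k : ℕ) (S : Finset V)
    {t : ℕ} (v : Fin t → V) (hinj : Function.Injective v)
    (himg : Finset.image v Finset.univ = Finset.univ \ S)
    (hmono : ∀ j₁ j₂ : Fin t, j₁ ≤ j₂ →
      (nonNbrs G S (v j₁)).card ≤ (nonNbrs G S (v j₂)).card)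
    (istar : ℕ)
    (histar : IsGreatest {i : ℕ | i ≤ t ∧
      ∑ j ∈ Finset.univ.filter (fun j : Fin t => (j : ℕ) < i),
        ((nonNbrs G S (v j)).card : ℤ) ≤ (k : ℤ) - ((nonEdges G S).card : ℤ)} istar)
    (C : Finset V) (hSC : S ⊆ C) (hC : (nonEdges G C).card ≤ k) :
    (∑ j ∈ Finset.univ.filter (fun j : Fin t => (j : ℕ) < (C \ S).card),
        ((nonNbrs G S (v j)).card : ℤ) ≤ (k : ℤ) - ((nonEdges G S).card : ℤ))
      ∧ C.card ≤ S.card + istar := by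
  classical
  set c : Fin t → ℕ := fun j => (nonNbrs G S (v j)).card with hc
  set m : ℕ := (C \ S).card with hmdef
  -- C \ S ⊆ image of v
  have hCS : C \ S ⊆ Finset.image v Finset.univ := by
    rw [himg]
    intro x hx
    simp only [Finset.mem_sdiff, Finset.mem_univ, true_and] at hx ⊢
    exact hx.2
  have hmt : m ≤ t := by
    have := Finset.card_le_card hCS
    rwa [Finset.card_image_of_injective _ hinj, Finset.card_univ, Fintype.card_fin] at this
  -- index set J
  set J : Finset (Fin t) := Finset.univ.filter (fun j => v j ∈ C \ S) with hJ
  have hJimg : J.image v = C \ S := by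
    apply Finset.Subset.antisymm
    · intro x hx
      simp only [hJ, Finset.mem_image, Finset.mem_filter, Finset.mem_univ, true_and] at hx
      obtain ⟨j, hj, rfl⟩ := hx
      exact hj
    · intro x hx
      obtain ⟨j, -, rfl⟩ := Finset.mem_image.mp (hCS hx)
      exact Finset.mem_image.mpr ⟨j, Finset.mem_filter.mpr ⟨Finset.mem_univ _, hx⟩, rfl⟩
  have hJcard : J.card = m := by
    rw [hmdef, ← hJimg, Finset.card_image_of_injective _ hinj]
  -- the key counting: card (nonEdges S) + ∑_{u ∈ C\S} |nonNbrs S u| ≤ k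
  set T : Finset (Sym2 V) :=
    (C \ S).biUnion (fun u => (nonNbrs G S u).image (fun w => s(u, w))) with hT
  have hmemT : ∀ e ∈ T, ∃ u w, e = s(u, w) ∧ u ∈ C \ S ∧ w ∈ nonNbrs G S u := by
    intro e he
    simp only [hT, Finset.mem_biUnion, Finset.mem_image] at he
    obtain ⟨u, hu, w, hw, rfl⟩ := he
    exact ⟨u, w, rfl, hu, hw⟩
  have hnn : ∀ {u w : V}, w ∈ nonNbrs G S u → w ∈ S ∧ w ≠ u ∧ ¬ G.Adj u w := by
    intro u w hw
    simp only [nonNbrs, Finset.mem_filter, Finset.mem_erase] at hw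
    exact ⟨hw.1.2, hw.1.1, hw.2⟩
  have hTcard : T.card = ∑ u ∈ C \ S, (nonNbrs G S u).card := by
    rw [hT, Finset.card_biUnion]
    · apply Finset.sum_congr rfl
      intro u hu
      apply Finset.card_image_of_injOn
      intro w hw w' hw' hww
      rcases Sym2.eq_iff.mp hww with ⟨-, h⟩ | ⟨h1, h2⟩
      · exact h
      · exact absurd h1.symm (hnn hw').2.1
    · intro u hu u' hu' huu
      simp only [Finset.disjoint_left, Finset.mem_image]
      rintro e ⟨w, hw, rfl⟩ ⟨w', hw', he⟩
      rcases Sym2.eq_iff.mp he with ⟨h1, -⟩ | ⟨h1, h2⟩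
      · exact huu h1.symm
      · exact (Finset.mem_sdiff.mp hu').2 (h1 ▸ (hnn hw).1)
  have hTsub : T ⊆ nonEdges G C := by
    intro e he
    obtain ⟨u, w, rfl, hu, hw⟩ := hmemT e he
    obtain ⟨hwS, hwu, hadj⟩ := hnn hw
    exact mem_nonEdges.mpr ⟨(Finset.mem_sdiff.mp hu).1, hSC hwS, fun h => hwu h.symm, hadj⟩
  have hSsub : nonEdges G S ⊆ nonEdges G C := by
    intro e he
    induction e using Sym2.ind with
    | _ a b =>
      obtain ⟨ha, hb, hne, hadj⟩ := mem_nonEdges.mp he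
      exact mem_nonEdges.mpr ⟨hSC ha, hSC hb, hne, hadj⟩
  have hdisj : Disjoint (nonEdges G S) T := by
    rw [Finset.disjoint_right]
    intro e he heS
    obtain ⟨u, w, rfl, hu, hw⟩ := hmemT e he
    obtain ⟨huS, -, -, -⟩ := mem_nonEdges.mp heS
    exact (Finset.mem_sdiff.mp hu).2 huS
  have hkey : (nonEdges G S).card + ∑ u ∈ C \ S, (nonNbrs G S u).card ≤ k := by
    calc (nonEdges G S).card + ∑ u ∈ C \ S, (nonNbrs G S u).card
        = (nonEdges G S ∪ T).card := by rw [Finset.card_union_of_disjoint hdisj, hTcard]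
      _ ≤ (nonEdges G C).card :=
          Finset.card_le_card (Finset.union_subset hSsub hTsub)
      _ ≤ k := hC
  -- rewrite the sum over C \ S as a sum over J
  have hsumJ : ∑ u ∈ C \ S, (nonNbrs G S u).card = ∑ j ∈ J, c j := by
    rw [← hJimg, Finset.sum_image (fun a _ b _ h => hinj h)]
  -- prefix sum ≤ sum over J
  have hprefix : ∑ j ∈ Finset.univ.filter (fun j : Fin t => (j : ℕ) < m), c j
      ≤ ∑ j ∈ J, c j := by
    have e := J.orderIsoOfFin hJcard
    have hstrict : StrictMono (fun i : Fin m => ((e i : Fin t) : ℕ)) := by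
      intro a b hab
      exact e.strictMono hab
    have hfilter : Finset.univ.filter (fun j : Fin t => (j : ℕ) < m)
        = Finset.univ.image (fun i : Fin m => Fin.castLE hmt i) := by
      ext j
      simp only [Finset.mem_filter, Finset.mem_univ, true_and, Finset.mem_image]
      constructor
      · intro hj
        exact ⟨⟨j, hj⟩, Fin.ext rfl⟩
      · rintro ⟨i, -, rfl⟩
        simp
    rw [hfilter, Finset.sum_image (fun a _ b _ h => by
      exact Fin.castLE_injective hmt h)]
    have : ∑ j ∈ J, c j = ∑ i : Fin m, c (e i) := by
      rw [← Finset.sum_attach J c]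
      exact (Equiv.sum_comp e.toEquiv (fun x => c x)).symm
    rw [this]
    apply Finset.sum_le_sum
    intro i _
    apply hmono
    have := fin_le_strictMono hstrict i
    exact Fin.le_def.mpr (by simpa using this)
  -- combined bound in ℕ
  have hnat : (nonEdges G S).card +
      ∑ j ∈ Finset.univ.filter (fun j : Fin t => (j : ℕ) < m), c j ≤ k := by
    omega
  have hfirst : ∑ j ∈ Finset.univ.filter (fun j : Fin t => (j : ℕ) < m),
      ((nonNbrs G S (v j)).card : ℤ) ≤ (k : ℤ) - ((nonEdges G S).card : ℤ) := by
    have h1 : ∑ j ∈ Finset.univ.filter (fun j : Fin t => (j : ℕ) < m),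
        ((nonNbrs G S (v j)).card : ℤ)
        = ((∑ j ∈ Finset.univ.filter (fun j : Fin t => (j : ℕ) < m), c j : ℕ) : ℤ) := by
      push_cast
      rfl
    rw [h1]
    omega
  refine ⟨hfirst, ?_⟩
  have hmem : m ∈ {i : ℕ | i ≤ t ∧
      ∑ j ∈ Finset.univ.filter (fun j : Fin t => (j : ℕ) < i),
        ((nonNbrs G S (v j)).card : ℤ) ≤ (k : ℤ) - ((nonEdges G S).card : ℤ)} :=
    ⟨hmt, hfirst⟩
  have hmi : m ≤ istar := histar.2 hmem
  have hcard : C.card = S.card + m := by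
    have h1 : (C \ S).card = C.card - S.card := Finset.card_sdiff_of_subset hSC
    have h2 : S.card ≤ C.card := Finset.card_le_card hSC
    omega
  omega
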